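/- Let I be a finite nonempty mode set, c1, c2 : I → ℝ nonnegative, p : I → ℝ nonnegative, and a ≥ 0 a constant. Let σ : [0,∞) → I be measurable with (1/t)·∫₀ᵗ 1{σ(τ)=i} dτ → p(i) as t → ∞ for every i ∈ I. Let f12, f2 : [0,∞) → ℝ be measurable with 0 ≤ f12(τ) ≤ c1(σ(τ)) and 0 ≤ f2(τ) ≤ c2(σ(τ)) for almost every τ. Suppose the queue lengths Q1(t) = Q1(0) + ∫₀ᵗ (a − f12(τ)) dτ and Q2(t) = Q2(0) + ∫₀ᵗ (f12(τ) − f2(τ)) dτ satisfy Q1(t)/t → 0 and Q2(t)/t → 0 as t → ∞. Then a ≤ Σ_{i∈I} p(i)·c1(i) and a ≤ Σ_{i∈I} p(i)·c2(i). -/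

import Mathlib

open MeasureTheory Filter

private lemma tandem_aux_integrableOn {f : ℝ → ℝ} (hf : Measurable f) (C : ℝ)
    (hb : ∀ᵐ τ ∂(volume.restrict (Set.Ici (0 : ℝ))), 0 ≤ f τ ∧ f τ ≤ C) (t : ℝ) :
    IntegrableOn f (Set.Ioc (0 : ℝ) t) := by
  apply Measure.integrableOn_of_bounded (M := C)
  · simp [Real.volume_Ioc]
  · exact hf.aestronglyMeasurable
  · have := ae_restrict_of_ae_restrict_of_subset
      (fun x hx => le_of_lt hx.1 : Set.Ioc (0:ℝ) t ⊆ Set.Ici 0) hb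
    filter_upwards [this] with τ hτ
    rw [Real.norm_eq_abs, abs_le]
    exact ⟨le_trans (by linarith [hτ.1, hτ.2]) hτ.1, hτ.2⟩

private lemma tandem_aux_avg_le
    {I : Type*} [Fintype I] [DecidableEq I]
    [MeasurableSpace I] [MeasurableSingletonClass I]
    (c p : I → ℝ) (σ : ℝ → I) (hσ : Measurable σ)
    (hfrac : ∀ i : I, Tendsto
      (fun t : ℝ => (1 / t) * ∫ τ in Set.Ioc (0 : ℝ) t, (if σ τ = i then (1 : ℝ) else 0))
      atTop (nhds (p i)))
    (hc : ∀ i, 0 ≤ c i)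
    (f : ℝ → ℝ) (hf : Measurable f)
    (hb : ∀ᵐ τ ∂(volume.restrict (Set.Ici (0 : ℝ))), 0 ≤ f τ ∧ f τ ≤ c (σ τ))
    (a : ℝ)
    (hF : Tendsto (fun t : ℝ => (1 / t) * ∫ τ in Set.Ioc (0 : ℝ) t, f τ)
      atTop (nhds a)) :
    a ≤ ∑ i : I, p i * c i := by
  have hCb : ∀ τ : ℝ, c (σ τ) ≤ ∑ i : I, c i := fun τ =>
    Finset.single_le_sum (f := c) (fun i _ => hc i) (Finset.mem_univ (σ τ))
  have hb' : ∀ᵐ τ ∂(volume.restrict (Set.Ici (0 : ℝ))), 0 ≤ f τ ∧ f τ ≤ ∑ i : I, c i := by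
    filter_upwards [hb] with τ hτ
    exact ⟨hτ.1, hτ.2.trans (hCb τ)⟩
  have hfint : ∀ t, IntegrableOn f (Set.Ioc (0 : ℝ) t) :=
    tandem_aux_integrableOn hf _ hb'
  -- integrability of indicator-type functions
  have hind : ∀ (i : I) (t : ℝ),
      IntegrableOn (fun τ => if σ τ = i then (1 : ℝ) else 0) (Set.Ioc (0 : ℝ) t) := by
    intro i t
    apply tandem_aux_integrableOn (C := 1)
    · exact Measurable.ite (hσ (MeasurableSet.singleton i)) measurable_const measurable_const
    · filter_upwards with τ
      constructor <;> split <;> norm_num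
  have hcσint : ∀ t, IntegrableOn (fun τ => c (σ τ)) (Set.Ioc (0 : ℝ) t) := by
    intro t
    apply tandem_aux_integrableOn (C := ∑ i : I, c i)
    · exact (measurable_of_countable c).comp hσ
    · filter_upwards with τ
      exact ⟨hc _, hCb τ⟩
  -- pointwise expansion of c ∘ σ as a sum
  have hsum : ∀ τ : ℝ, c (σ τ) = ∑ i : I, (if σ τ = i then (1 : ℝ) else 0) * c i := by
    intro τ
    rw [show (∑ i : I, (if σ τ = i then (1 : ℝ) else 0) * c i)
        = ∑ i : I, (if σ τ = i then c i else 0) by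
      apply Finset.sum_congr rfl; intro i _; split <;> simp]
    rw [Finset.sum_ite_eq]
    simp
  -- eventual inequality
  have hev : ∀ᶠ t in (atTop : Filter ℝ),
      (1 / t) * ∫ τ in Set.Ioc (0 : ℝ) t, f τ
        ≤ ∑ i : I, c i * ((1 / t) * ∫ τ in Set.Ioc (0 : ℝ) t,
            (if σ τ = i then (1 : ℝ) else 0)) := by
    filter_upwards [eventually_gt_atTop (0 : ℝ)] with t ht
    have h1 : ∫ τ in Set.Ioc (0 : ℝ) t, f τ ≤ ∫ τ in Set.Ioc (0 : ℝ) t, c (σ τ) := by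
      apply setIntegral_mono_ae_restrict (hfint t) (hcσint t)
      have := ae_restrict_of_ae_restrict_of_subset
        (fun x hx => le_of_lt hx.1 : Set.Ioc (0:ℝ) t ⊆ Set.Ici 0) hb
      filter_upwards [this] with τ hτ using hτ.2
    have h2 : ∫ τ in Set.Ioc (0 : ℝ) t, c (σ τ)
        = ∑ i : I, (∫ τ in Set.Ioc (0 : ℝ) t, (if σ τ = i then (1 : ℝ) else 0)) * c i := by
      calc ∫ τ in Set.Ioc (0 : ℝ) t, c (σ τ)
          = ∫ τ in Set.Ioc (0 : ℝ) t, ∑ i : I, (if σ τ = i then (1 : ℝ) else 0) * c i := by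
            apply setIntegral_congr_fun measurableSet_Ioc
            intro τ _; exact hsum τ
        _ = ∑ i : I, ∫ τ in Set.Ioc (0 : ℝ) t, (if σ τ = i then (1 : ℝ) else 0) * c i := by
            apply integral_finset_sum
            intro i _
            exact (hind i t).mul_const (c i)
        _ = ∑ i : I, (∫ τ in Set.Ioc (0 : ℝ) t, (if σ τ = i then (1 : ℝ) else 0)) * c i := by
            apply Finset.sum_congr rfl
            intro i _
            exact integral_mul_const _ _
    have h3 : (1 / t) * ∫ τ in Set.Ioc (0 : ℝ) t, f τ
        ≤ (1 / t) * ∫ τ in Set.Ioc (0 : ℝ) t, c (σ τ) := by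
      apply mul_le_mul_of_nonneg_left h1 (by positivity)
    calc (1 / t) * ∫ τ in Set.Ioc (0 : ℝ) t, f τ
        ≤ (1 / t) * ∫ τ in Set.Ioc (0 : ℝ) t, c (σ τ) := h3
      _ = ∑ i : I, c i * ((1 / t) * ∫ τ in Set.Ioc (0 : ℝ) t,
            (if σ τ = i then (1 : ℝ) else 0)) := by
          rw [h2, Finset.mul_sum]
          apply Finset.sum_congr rfl
          intro i _; ring
  have hlim : Tendsto (fun t : ℝ => ∑ i : I, c i * ((1 / t) * ∫ τ in Set.Ioc (0 : ℝ) t,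
      (if σ τ = i then (1 : ℝ) else 0))) atTop (nhds (∑ i : I, c i * p i)) := by
    apply tendsto_finset_sum
    intro i _
    exact (hfrac i).const_mul (c i)
  have := le_of_tendsto_of_tendsto hF hlim hev
  calc a ≤ ∑ i : I, c i * p i := this
    _ = ∑ i : I, p i * c i := by
        apply Finset.sum_congr rfl; intro i _; ring

/-- Pathwise core of the necessity direction of Theorem 2 (tandem fluid queue):
if both queue lengths grow sublinearly, the flows are nonnegative and bounded by
the mode-dependent capacities, and the switching signal spends asymptotic time
fraction `p i` in mode `i`, then the inflow rate `a` is bounded by the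
time-averaged capacity of each link. -/
theorem tandem_queue_necessity
    {I : Type*} [Fintype I] [Nonempty I] [DecidableEq I]
    [MeasurableSpace I] [MeasurableSingletonClass I]
    (c1 c2 p : I → ℝ) (hc1 : ∀ i, 0 ≤ c1 i) (hc2 : ∀ i, 0 ≤ c2 i)
    (hp : ∀ i, 0 ≤ p i)
    (a : ℝ) (ha : 0 ≤ a)
    (σ : ℝ → I) (hσ : Measurable σ)
    (hfrac : ∀ i : I, Tendsto
      (fun t : ℝ => (1 / t) * ∫ τ in Set.Ioc (0 : ℝ) t, (if σ τ = i then (1 : ℝ) else 0))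
      atTop (nhds (p i)))
    (f12 f2 : ℝ → ℝ) (hf12 : Measurable f12) (hf2 : Measurable f2)
    (hbound : ∀ᵐ τ ∂(volume.restrict (Set.Ici (0 : ℝ))),
      (0 ≤ f12 τ ∧ f12 τ ≤ c1 (σ τ)) ∧ (0 ≤ f2 τ ∧ f2 τ ≤ c2 (σ τ)))
    (Q10 Q20 : ℝ)
    (hQ1 : Tendsto
      (fun t : ℝ => (Q10 + ∫ τ in Set.Ioc (0 : ℝ) t, (a - f12 τ)) / t)
      atTop (nhds 0))
    (hQ2 : Tendsto
      (fun t : ℝ => (Q20 + ∫ τ in Set.Ioc (0 : ℝ) t, (f12 τ - f2 τ)) / t)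
      atTop (nhds 0)) :
    a ≤ ∑ i : I, p i * c1 i ∧ a ≤ ∑ i : I, p i * c2 i := by
  have hb1 : ∀ᵐ τ ∂(volume.restrict (Set.Ici (0 : ℝ))), 0 ≤ f12 τ ∧ f12 τ ≤ c1 (σ τ) := by
    filter_upwards [hbound] with τ hτ using hτ.1
  have hb2 : ∀ᵐ τ ∂(volume.restrict (Set.Ici (0 : ℝ))), 0 ≤ f2 τ ∧ f2 τ ≤ c2 (σ τ) := by
    filter_upwards [hbound] with τ hτ using hτ.2
  have hCb1 : ∀ τ : ℝ, c1 (σ τ) ≤ ∑ i : I, c1 i := fun τ =>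
    Finset.single_le_sum (f := c1) (fun i _ => hc1 i) (Finset.mem_univ (σ τ))
  have hCb2 : ∀ τ : ℝ, c2 (σ τ) ≤ ∑ i : I, c2 i := fun τ =>
    Finset.single_le_sum (f := c2) (fun i _ => hc2 i) (Finset.mem_univ (σ τ))
  have hb1' : ∀ᵐ τ ∂(volume.restrict (Set.Ici (0 : ℝ))), 0 ≤ f12 τ ∧ f12 τ ≤ ∑ i : I, c1 i := by
    filter_upwards [hb1] with τ hτ using ⟨hτ.1, hτ.2.trans (hCb1 τ)⟩
  have hb2' : ∀ᵐ τ ∂(volume.restrict (Set.Ici (0 : ℝ))), 0 ≤ f2 τ ∧ f2 τ ≤ ∑ i : I, c2 i := by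
    filter_upwards [hb2] with τ hτ using ⟨hτ.1, hτ.2.trans (hCb2 τ)⟩
  have hint12 : ∀ t, IntegrableOn f12 (Set.Ioc (0 : ℝ) t) :=
    tandem_aux_integrableOn hf12 _ hb1'
  have hint2 : ∀ t, IntegrableOn f2 (Set.Ioc (0 : ℝ) t) :=
    tandem_aux_integrableOn hf2 _ hb2'
  have hq0 : ∀ (Q : ℝ), Tendsto (fun t : ℝ => Q / t) atTop (nhds 0) :=
    fun Q => Tendsto.div_atTop tendsto_const_nhds tendsto_id
  -- first average limit
  have hF : Tendsto (fun t : ℝ => (1 / t) * ∫ τ in Set.Ioc (0 : ℝ) t, f12 τ)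
      atTop (nhds a) := by
    have key : (fun t : ℝ => (1 / t) * ∫ τ in Set.Ioc (0 : ℝ) t, f12 τ)
        =ᶠ[atTop] fun t => (Q10 / t + a)
          - (Q10 + ∫ τ in Set.Ioc (0 : ℝ) t, (a - f12 τ)) / t := by
      filter_upwards [eventually_gt_atTop (0 : ℝ)] with t ht
      have hsub : ∫ τ in Set.Ioc (0 : ℝ) t, (a - f12 τ)
          = t * a - ∫ τ in Set.Ioc (0 : ℝ) t, f12 τ := by
        rw [integral_sub (integrableOn_const (C := a) (s := Set.Ioc (0 : ℝ) t) (μ := volume) (by simp [Real.volume_Ioc]))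
          (hint12 t)]
        rw [setIntegral_const]
        simp [Real.volume_Ioc, ENNReal.toReal_ofReal ht.le, smul_eq_mul, ht.le]
      rw [hsub]
      field_simp
      ring
    have : Tendsto (fun t : ℝ => (Q10 / t + a)
        - (Q10 + ∫ τ in Set.Ioc (0 : ℝ) t, (a - f12 τ)) / t) atTop (nhds ((0 + a) - 0)) :=
      ((hq0 Q10).add tendsto_const_nhds).sub hQ1
    rw [show (0 : ℝ) + a - 0 = a by ring] at this
    exact Tendsto.congr' key.symm this
  -- second average limit
  have hG : Tendsto (fun t : ℝ => (1 / t) * ∫ τ in Set.Ioc (0 : ℝ) t, f2 τ)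
      atTop (nhds a) := by
    have key : (fun t : ℝ => (1 / t) * ∫ τ in Set.Ioc (0 : ℝ) t, f2 τ)
        =ᶠ[atTop] fun t => (Q20 / t + (1 / t) * ∫ τ in Set.Ioc (0 : ℝ) t, f12 τ)
          - (Q20 + ∫ τ in Set.Ioc (0 : ℝ) t, (f12 τ - f2 τ)) / t := by
      filter_upwards [eventually_gt_atTop (0 : ℝ)] with t ht
      have hsub : ∫ τ in Set.Ioc (0 : ℝ) t, (f12 τ - f2 τ)
          = (∫ τ in Set.Ioc (0 : ℝ) t, f12 τ) - ∫ τ in Set.Ioc (0 : ℝ) t, f2 τ :=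
        integral_sub (hint12 t) (hint2 t)
      rw [hsub]
      field_simp
      ring
    have : Tendsto (fun t : ℝ => (Q20 / t + (1 / t) * ∫ τ in Set.Ioc (0 : ℝ) t, f12 τ)
        - (Q20 + ∫ τ in Set.Ioc (0 : ℝ) t, (f12 τ - f2 τ)) / t) atTop (nhds ((0 + a) - 0)) :=
      ((hq0 Q20).add hF).sub hQ2
    rw [show (0 : ℝ) + a - 0 = a by ring] at this
    exact Tendsto.congr' key.symm this
  exact ⟨tandem_aux_avg_le c1 p σ hσ hfrac hc1 f12 hf12 hb1 a hF,
    tandem_aux_avg_le c2 p σ hσ hfrac hc2 f2 hf2 hb2 a hG⟩
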